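/- Let m ∈ ℕ, let ξ₁ < ξ₂ < … < ξ_m be real numbers, let α₁, …, α_m ∈ ℝ, and let c₀ > 0 satisfy 6·c₀·|α_k| < 1 for every k and (if m ≥ 2) c₀ < (1/2)·min_k (ξ_{k+1} − ξ_k). For each k define φ̄_k(x) = φ((x−ξ_k)/c₀)·(x−ξ_k)·|x−ξ_k| with φ(u) = (1+u)³(1−u)³ for |u| ≤ 1 and φ(u) = 0 otherwise, and define G(x) = x + Σ_{k=1}^m α_k·φ̄_k(x). Then: (a) G(x) = x for every x outside the union of the intervals (ξ_k − c₀, ξ_k + c₀); (b) G is strictly increasing and is a bijection of ℝ onto ℝ with strictly increasing inverse G⁻¹; (c) G − id and G⁻¹ − id are bounded, and G and G⁻¹ are Lipschitz; (d) G and G⁻¹ are continuously differentiable with bounded, Lipschitz first derivatives, and at every point outside the finite set {ξ₁, …, ξ_m} both G and G⁻¹ are twice differentiable with second derivatives that are bounded and Lipschitz on each connected component of the complement of that finite set. -/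

import Mathlib

/-- The basic bump `φ(u) = (1+u)³(1-u)³` on `[-1,1]`, zero outside. -/
noncomputable def phi (u : ℝ) : ℝ := if |u| ≤ 1 then (1 + u) ^ 3 * (1 - u) ^ 3 else 0

/-- The localized bump `φ̄_k(x) = φ((x-ξ)/c)·(x-ξ)·|x-ξ|`. -/
noncomputable def phibar (ξ c x : ℝ) : ℝ := phi ((x - ξ) / c) * (x - ξ) * |x - ξ|

namespace StmtAux
open Set Filter NNReal

noncomputable def f0 (u : ℝ) : ℝ := phi u * (u * |u|)
noncomputable def fp (u : ℝ) : ℝ :=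
  if |u| ≤ 1 then u * (2 - 12*u^2 + 18*u^4 - 8*u^6) else 0
noncomputable def f1 (u : ℝ) : ℝ :=
  if |u| ≤ 1 then |u| * (2 - 12*u^2 + 18*u^4 - 8*u^6) else 0
noncomputable def gp (u : ℝ) : ℝ :=
  if |u| ≤ 1 then 2 - 36*u^2 + 90*u^4 - 56*u^6 else 0
noncomputable def f2 (u : ℝ) : ℝ := if 0 ≤ u then gp u else -gp u

lemma phibar_eq {c : ℝ} (hc : 0 < c) (ξ x : ℝ) :
    phibar ξ c x = c^2 * f0 ((x - ξ) / c) := by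
  have h1 : x - ξ = c * ((x - ξ) / c) := by field_simp
  rw [phibar, f0]
  rw [show phi ((x - ξ) / c) * (x - ξ) * |x - ξ| =
      phi ((x - ξ) / c) * (c * ((x - ξ)/c)) * |c * ((x - ξ)/c)| by rw [← h1]]
  rw [abs_mul, abs_of_pos hc]
  ring

lemma hasDerivAt_of_sq_bound {f : ℝ → ℝ} {u C r : ℝ} (hr : 0 < r)
    (h : ∀ v, |v - u| < r → |f v - f u| ≤ C * (v - u)^2) : HasDerivAt f 0 u := by
  rw [hasDerivAt_iff_isLittleO]
  have h1 : (fun v => f v - f u) =O[nhds u] fun v => (v - u)^2 := by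
    rw [Asymptotics.isBigO_iff]
    refine ⟨C, ?_⟩
    filter_upwards [Metric.ball_mem_nhds u hr] with v hv
    rw [Metric.mem_ball, Real.dist_eq] at hv
    have := h v hv
    rw [Real.norm_eq_abs, Real.norm_eq_abs, abs_pow]
    calc |f v - f u| ≤ C * (v - u)^2 := this
    _ ≤ C * |v - u|^2 := by rw [sq_abs]
  have h2 : (fun v : ℝ => (v - u)^2) =o[nhds u] fun v => v - u := by
    have hb : (fun v : ℝ => v - u) =O[nhds u] fun v => v - u := Asymptotics.isBigO_refl _ _
    have : (fun v : ℝ => v - u) =o[nhds u] fun _ => (1:ℝ) := by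
      rw [Asymptotics.isLittleO_one_iff]
      have : Filter.Tendsto (fun v : ℝ => v - u) (nhds u) (nhds (u - u)) :=
        (continuous_id.sub continuous_const).tendsto u
      simpa using this
    have := hb.mul_isLittleO this
    simpa [sq, mul_comm] using this
  simpa using h1.trans_isLittleO h2

lemma hasDerivAt_mul_abs (u : ℝ) : HasDerivAt (fun v : ℝ => v * |v|) (2 * |u|) u := by
  rcases lt_trichotomy u 0 with hu | hu | hu
  · have he : (fun v : ℝ => v * |v|) =ᶠ[nhds u] fun v => -(v * v) := by
      filter_upwards [Iio_mem_nhds hu] with v hv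
      rw [abs_of_neg hv]; ring
    have h2 : HasDerivAt (fun v : ℝ => -(v * v)) (2 * |u|) u := by
      have h3 := ((hasDerivAt_id u).mul (hasDerivAt_id u)).neg
      have : -(1 * id u + id u * 1) = 2 * |u| := by
        simp [abs_of_neg hu]; ring
      rwa [this] at h3
    exact h2.congr_of_eventuallyEq he
  · subst hu
    have : HasDerivAt (fun v : ℝ => v * |v|) 0 0 := by
      apply hasDerivAt_of_sq_bound (C := 1) (r := 1) one_pos
      intro v _
      simp only [sub_zero, abs_zero, mul_zero, zero_mul, one_mul]
      rw [abs_mul, abs_abs]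
      nlinarith [sq_abs v, abs_nonneg v]
    simpa using this
  · have he : (fun v : ℝ => v * |v|) =ᶠ[nhds u] fun v => v * v := by
      filter_upwards [Ioi_mem_nhds hu] with v hv
      rw [abs_of_pos hv]
    have h2 : HasDerivAt (fun v : ℝ => v * v) (2 * |u|) u := by
      have h3 := (hasDerivAt_id u).mul (hasDerivAt_id u)
      have : 1 * id u + id u * 1 = 2 * |u| := by
        simp [abs_of_pos hu]; ring
      rwa [this] at h3
    exact h2.congr_of_eventuallyEq he

lemma isOpen_absLt : IsOpen {v : ℝ | |v| < 1} := isOpen_lt continuous_abs continuous_const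
lemma isOpen_absGt : IsOpen {v : ℝ | 1 < |v|} := isOpen_lt continuous_const continuous_abs

lemma poly_hasDerivAt (u : ℝ) :
    HasDerivAt (fun v : ℝ => v * (2 - 12*v^2 + 18*v^4 - 8*v^6))
      (2 - 36*u^2 + 90*u^4 - 56*u^6) u := by
  have h : HasDerivAt (fun v : ℝ => v * (2 - 12*v^2 + 18*v^4 - 8*v^6))
      (1 * (2 - 12*u^2 + 18*u^4 - 8*u^6) +
        u * (0 - 12*(2*u^1*1) + 18*(4*u^3*1) - 8*(6*u^5*1))) u := by
    exact (hasDerivAt_id u).mul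
      ((((hasDerivAt_const u (2:ℝ)).sub (((hasDerivAt_id u).pow 2).const_mul 12)).add
        (((hasDerivAt_id u).pow 4).const_mul 18)).sub (((hasDerivAt_id u).pow 6).const_mul 8))
  convert h using 1; ring

lemma poly2_hasDerivAt (u : ℝ) :
    HasDerivAt (fun v : ℝ => 2 - 36*v^2 + 90*v^4 - 56*v^6)
      (-72*u + 360*u^3 - 336*u^5) u := by
  have h : HasDerivAt (fun v : ℝ => 2 - 36*v^2 + 90*v^4 - 56*v^6)
      (0 - 36*(2*u^1*1) + 90*(4*u^3*1) - 56*(6*u^5*1)) u := by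
    exact (((hasDerivAt_const u (2:ℝ)).sub (((hasDerivAt_id u).pow 2).const_mul 36)).add
        (((hasDerivAt_id u).pow 4).const_mul 90)).sub (((hasDerivAt_id u).pow 6).const_mul 56)
  convert h using 1; ring

lemma fp_one : fp 1 = 0 := by norm_num [fp]
lemma fp_negone : fp (-1) = 0 := by norm_num [fp]
lemma gp_one : gp 1 = 0 := by norm_num [gp]
lemma gp_negone : gp (-1) = 0 := by norm_num [gp]
lemma f0_one : f0 1 = 0 := by norm_num [f0, phi]
lemma f0_negone : f0 (-1) = 0 := by norm_num [f0, phi]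

lemma fp_neg (v : ℝ) : fp (-v) = - fp v := by
  simp only [fp, abs_neg]
  by_cases h : |v| ≤ 1
  · rw [if_pos h, if_pos h]; ring
  · rw [if_neg h, if_neg h]; ring

lemma f0_neg (v : ℝ) : f0 (-v) = - f0 v := by
  simp only [f0, phi, abs_neg]
  by_cases h : |v| ≤ 1
  · rw [if_pos h, if_pos h]; ring
  · rw [if_neg h, if_neg h]; ring

lemma fp_bound_near_one {v : ℝ} (hv : |v - 1| < 1/2) : |fp v| ≤ 24 * (v - 1)^2 := by
  have hv1 : 1/2 < v := by cases abs_lt.mp hv; linarith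
  by_cases h : |v| ≤ 1
  · have hv2 : v ≤ 1 := (abs_le.mp h).2
    rw [fp, if_pos h]
    have c1 : (0:ℝ) ≤ 2 - 2*v := by linarith
    have c2 : (0:ℝ) ≤ 4 - (1+v)^2 := by nlinarith
    have c3 : (0:ℝ) ≤ 3 - (4*v^2-1) := by nlinarith
    have c4 : (0:ℝ) ≤ 4*v^2-1 := by nlinarith
    have c5 : (0:ℝ) ≤ 2*v := by linarith
    have hB : 2*v*((1+v)^2*(4*v^2-1)) ≤ 24 := by
      nlinarith [mul_nonneg (mul_nonneg c1 (sq_nonneg (1+v))) c4,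
        mul_nonneg c2 c4, c3, mul_nonneg c5 (mul_nonneg c2 c4),
        mul_nonneg c5 (mul_nonneg (sq_nonneg (1+v)) c3)]
    have hbr : (0:ℝ) ≤ 2*v*((1+v)^2*(4*v^2-1)) :=
      mul_nonneg c5 (mul_nonneg (sq_nonneg _) c4)
    have hA : (0:ℝ) ≤ (1-v)^2 := sq_nonneg _
    rw [abs_le]
    constructor
    · nlinarith [mul_nonneg hA (sub_nonneg.mpr hB)]
    · nlinarith [mul_nonneg hA hbr]
  · rw [fp, if_neg h]
    simp only [abs_zero]
    positivity

lemma fp_bound_near_negone {v : ℝ} (hv : |v + 1| < 1/2) : |fp v| ≤ 24 * (v + 1)^2 := by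
  have h2 : |(-v) - 1| < 1/2 := by rw [show (-v) - 1 = -(v+1) by ring, abs_neg]; exact hv
  have h3 := fp_bound_near_one h2
  rw [fp_neg, abs_neg] at h3
  calc |fp v| ≤ 24 * ((-v) - 1)^2 := h3
  _ = 24 * (v + 1)^2 := by ring

lemma f0_bound_near_one {v : ℝ} (hv : |v - 1| < 1/2) : |f0 v| ≤ 4 * (v - 1)^2 := by
  have hv1 : 1/2 < v := by cases abs_lt.mp hv; linarith
  by_cases h : |v| ≤ 1
  · have hv2 : v ≤ 1 := (abs_le.mp h).2
    rw [f0, phi, if_pos h, abs_of_pos (by linarith : (0:ℝ) < v)]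
    have c1 : (0:ℝ) ≤ 1 - v := by linarith
    have c2 : (0:ℝ) ≤ 8 - (1+v)^3 := by nlinarith [sq_nonneg (1-v), sq_nonneg (1+v), sq_nonneg v]
    have c3 : (0:ℝ) ≤ 1 - v*v := by nlinarith
    have c6 : (0:ℝ) ≤ (1+v)^3 := by positivity
    have c7 : (0:ℝ) ≤ v*v := by positivity
    have hval : (0:ℝ) ≤ (1+v)^3 * (1-v)^3 * (v*v) := by
      apply mul_nonneg (mul_nonneg c6 (by positivity)) c7
    rw [abs_of_nonneg hval]
    nlinarith [mul_nonneg (mul_nonneg c2 c1) c7, mul_nonneg (mul_nonneg c6 (sq_nonneg (1-v))) c3,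
      mul_nonneg (mul_nonneg c6 c1) c7, sq_nonneg (1-v)]
  · rw [f0, phi, if_neg h]
    simp only [zero_mul, abs_zero]
    positivity

lemma f0_bound_near_negone {v : ℝ} (hv : |v + 1| < 1/2) : |f0 v| ≤ 4 * (v + 1)^2 := by
  have h2 : |(-v) - 1| < 1/2 := by rw [show (-v) - 1 = -(v+1) by ring, abs_neg]; exact hv
  have h3 := f0_bound_near_one h2
  rw [f0_neg, abs_neg] at h3
  calc |f0 v| ≤ 4 * ((-v) - 1)^2 := h3
  _ = 4 * (v + 1)^2 := by ring

lemma fp_hasDerivAt (u : ℝ) : HasDerivAt fp (gp u) u := by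
  rcases lt_trichotomy |u| 1 with hu | hu | hu
  · have he : fp =ᶠ[nhds u] fun v => v * (2 - 12*v^2 + 18*v^4 - 8*v^6) := by
      filter_upwards [isOpen_absLt.mem_nhds hu] with v hv
      rw [fp, if_pos (le_of_lt hv)]
    rw [gp, if_pos (le_of_lt hu)]
    exact (poly_hasDerivAt u).congr_of_eventuallyEq he
  · have hgp : gp u = 0 := by
      rcases abs_eq (by norm_num : (0:ℝ) ≤ 1) |>.mp hu with h | h <;> rw [h]
      · exact gp_one
      · exact gp_negone
    rw [hgp]
    rcases abs_eq (by norm_num : (0:ℝ) ≤ 1) |>.mp hu with h | h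
    · rw [h]
      apply hasDerivAt_of_sq_bound (C := 24) (r := 1/2) (by norm_num)
      intro v hv
      rw [fp_one, sub_zero]
      exact fp_bound_near_one hv
    · rw [h]
      apply hasDerivAt_of_sq_bound (C := 24) (r := 1/2) (by norm_num)
      intro v hv
      rw [fp_negone, sub_zero]
      rw [show v - (-1) = v + 1 by ring]
      exact fp_bound_near_negone (by rwa [show v - (-1) = v + 1 by ring] at hv)
  · have he : fp =ᶠ[nhds u] fun _ => (0:ℝ) := by
      filter_upwards [isOpen_absGt.mem_nhds hu] with v hv
      rw [fp, if_neg (not_le.mpr hv)]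
    have hgp : gp u = 0 := by rw [gp, if_neg (not_le.mpr hu)]
    rw [hgp]
    exact (hasDerivAt_const u 0).congr_of_eventuallyEq he

lemma f0_hasDerivAt (u : ℝ) : HasDerivAt f0 (f1 u) u := by
  rcases lt_trichotomy |u| 1 with hu | hu | hu
  · have he : f0 =ᶠ[nhds u] fun v => ((1+v)^3*(1-v)^3) * (v * |v|) := by
      filter_upwards [isOpen_absLt.mem_nhds hu] with v hv
      rw [f0, phi, if_pos (le_of_lt hv)]
    have h1 : HasDerivAt (fun v : ℝ => (1+v)^3) (3*(1+u)^2) u := by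
      have := ((hasDerivAt_id u).const_add 1).fun_pow 3
      refine this.congr_deriv ?_
      simp only [id]; push_cast; ring
    have h2 : HasDerivAt (fun v : ℝ => (1-v)^3) (-(3*(1-u)^2)) u := by
      have := ((hasDerivAt_id u).const_sub 1).fun_pow 3
      refine this.congr_deriv ?_
      simp only [id]; push_cast; ring
    have h3 := (h1.fun_mul h2).fun_mul (hasDerivAt_mul_abs u)
    have key : HasDerivAt (fun v : ℝ => ((1+v)^3*(1-v)^3) * (v * |v|)) (f1 u) u := by
      refine h3.congr_deriv ?_
      rw [f1, if_pos (le_of_lt hu)]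
      rcases le_or_gt 0 u with h | h
      · rw [abs_of_nonneg h]; ring
      · rw [abs_of_neg h]; ring
    exact key.congr_of_eventuallyEq he
  · have hf1 : f1 u = 0 := by
      rw [f1, if_pos (le_of_eq hu), hu]
      rcases abs_eq (by norm_num : (0:ℝ) ≤ 1) |>.mp hu with h | h <;> rw [h] <;> norm_num
    rw [hf1]
    rcases abs_eq (by norm_num : (0:ℝ) ≤ 1) |>.mp hu with h | h
    · rw [h]
      apply hasDerivAt_of_sq_bound (C := 4) (r := 1/2) (by norm_num)
      intro v hv
      rw [f0_one, sub_zero]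
      exact f0_bound_near_one hv
    · rw [h]
      apply hasDerivAt_of_sq_bound (C := 4) (r := 1/2) (by norm_num)
      intro v hv
      rw [f0_negone, sub_zero, show v - (-1) = v + 1 by ring]
      exact f0_bound_near_negone (by rwa [show v - (-1) = v + 1 by ring] at hv)
  · have he : f0 =ᶠ[nhds u] fun _ => (0:ℝ) := by
      filter_upwards [isOpen_absGt.mem_nhds hu] with v hv
      rw [f0, phi, if_neg (not_le.mpr hv), zero_mul]
    have hf1 : f1 u = 0 := by rw [f1, if_neg (not_le.mpr hu)]
    rw [hf1]
    exact (hasDerivAt_const u 0).congr_of_eventuallyEq he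

lemma f1_eq_fp {u : ℝ} (h : 0 ≤ u) : f1 u = fp u := by
  rw [f1, fp]
  by_cases h1 : |u| ≤ 1
  · rw [if_pos h1, if_pos h1, abs_of_nonneg h]
  · rw [if_neg h1, if_neg h1]

lemma f1_eq_negfp {u : ℝ} (h : u ≤ 0) : f1 u = -fp u := by
  rw [f1, fp]
  by_cases h1 : |u| ≤ 1
  · rw [if_pos h1, if_pos h1, abs_of_nonpos h]; ring
  · rw [if_neg h1, if_neg h1]; ring

lemma f1_hasDerivAt {u : ℝ} (h : u ≠ 0) : HasDerivAt f1 (f2 u) u := by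
  rcases h.lt_or_gt with hu | hu
  · have he : f1 =ᶠ[nhds u] fun v => -fp v := by
      filter_upwards [Iio_mem_nhds hu] with v hv
      exact f1_eq_negfp (le_of_lt hv)
    have : f2 u = -gp u := by rw [f2, if_neg (not_le.mpr hu)]
    rw [this]
    exact (fp_hasDerivAt u).neg.congr_of_eventuallyEq he
  · have he : f1 =ᶠ[nhds u] fp := by
      filter_upwards [Ioi_mem_nhds hu] with v hv
      exact f1_eq_fp (le_of_lt hv)
    have : f2 u = gp u := by rw [f2, if_pos (le_of_lt hu)]
    rw [this]
    exact (fp_hasDerivAt u).congr_of_eventuallyEq he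

lemma f0_abs_le (u : ℝ) : |f0 u| ≤ 1 := by
  by_cases h : |u| ≤ 1
  · rw [f0, phi, if_pos h, abs_mul]
    rcases abs_le.mp h with ⟨ha, hb⟩
    have h1 : |(1+u)^3*(1-u)^3| ≤ 1 := by
      rw [show (1+u)^3*(1-u)^3 = ((1+u)*(1-u))^3 by ring, abs_pow]
      apply pow_le_one₀ (abs_nonneg _)
      rw [abs_le]
      constructor <;> nlinarith [sq_nonneg u]
    have h2 : abs (u * |u|) ≤ 1 := by
      rw [abs_mul, abs_abs]
      nlinarith [abs_nonneg u, abs_le.mp h]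
    calc |(1+u)^3*(1-u)^3| * abs (u * |u|) ≤ 1 * 1 :=
      mul_le_mul h1 h2 (abs_nonneg _) zero_le_one
    _ = 1 := by norm_num
  · rw [f0, phi, if_neg h, zero_mul, abs_zero]
    norm_num

lemma fp_abs_le (u : ℝ) : |fp u| ≤ 6 := by
  rw [fp]
  by_cases h : |u| ≤ 1
  · rw [if_pos h]
    rcases abs_le.mp h with ⟨ha, hb⟩
    have hu2 : u^2 ≤ 1 := by nlinarith
    have h0 : (0:ℝ) ≤ 1 - u^2 := by linarith
    have ha1 : (1-u^2)^2 ≤ 1 := by nlinarith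
    have hb3 : |1-4*u^2| ≤ 3 := by
      rw [abs_le]
      constructor <;> nlinarith [sq_nonneg u]
    have hu' : |2*u| ≤ 2 := by
      rw [abs_mul, abs_two]
      nlinarith [abs_le.mp h, abs_nonneg u]
    rw [show u*(2-12*u^2+18*u^4-8*u^6) = (2*u)*((1-u^2)^2*(1-4*u^2)) by ring]
    rw [abs_mul (2*u) ((1-u^2)^2*(1-4*u^2)), abs_mul ((1-u^2)^2) (1-4*u^2),
      show |(1-u^2:ℝ)^2| = (1-u^2)^2 from abs_of_nonneg (sq_nonneg _)]
    calc |2*u| * ((1-u^2)^2 * |1-4*u^2|)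
        ≤ 2 * ((1-u^2)^2 * |1-4*u^2|) :=
          mul_le_mul_of_nonneg_right hu' (by positivity)
    _ ≤ 2 * (1 * 3) := by
          apply mul_le_mul_of_nonneg_left _ (by norm_num : (0:ℝ) ≤ 2)
          exact mul_le_mul ha1 hb3 (abs_nonneg _) (by norm_num)
    _ = 6 := by norm_num
  · rw [if_neg h]; norm_num

lemma f1_abs_le (u : ℝ) : |f1 u| ≤ 6 := by
  rcases le_or_gt 0 u with h | h
  · rw [f1_eq_fp h]; exact fp_abs_le u
  · rw [f1_eq_negfp h.le, abs_neg]; exact fp_abs_le u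

lemma gp_abs_le (u : ℝ) : |gp u| ≤ 184 := by
  rw [gp]
  by_cases h : |u| ≤ 1
  · rw [if_pos h]
    rcases abs_le.mp h with ⟨ha, hb⟩
    have h2 : u^2 ≤ 1 := by nlinarith
    have h4 : u^4 ≤ 1 := by nlinarith
    have h6 : u^6 ≤ 1 := by nlinarith
    have h2' : (0:ℝ) ≤ u^2 := sq_nonneg u
    have h4' : (0:ℝ) ≤ u^4 := by positivity
    have h6' : (0:ℝ) ≤ u^6 := by positivity
    rw [abs_le]; constructor <;> nlinarith
  · rw [if_neg h]; norm_num

lemma f2_abs_le (u : ℝ) : |f2 u| ≤ 184 := by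
  rw [f2]
  by_cases h : 0 ≤ u
  · rw [if_pos h]; exact gp_abs_le u
  · rw [if_neg h, abs_neg]; exact gp_abs_le u

lemma abs_le_nnreal {x : ℝ} {C : ℝ≥0} (h : |x| ≤ (C:ℝ)) : ‖x‖₊ ≤ C := by
  rw [← NNReal.coe_le_coe, coe_nnnorm, Real.norm_eq_abs]
  exact h

lemma lipOn_of_deriv {f g : ℝ → ℝ} {s : Set ℝ} (hs : Convex ℝ s)
    (hd : ∀ x ∈ s, HasDerivWithinAt f (g x) s x) {C : ℝ≥0}
    (hb : ∀ x ∈ s, |g x| ≤ (C:ℝ)) : LipschitzOnWith C f s :=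
  hs.lipschitzOnWith_of_nnnorm_hasDerivWithin_le hd fun x hx => abs_le_nnreal (hb x hx)

lemma lipschitzOnWith_glue {f : ℝ → ℝ} {K : ℝ≥0} {a : ℝ} {s t : Set ℝ}
    (hs : s ⊆ Iic a) (ht : t ⊆ Ici a) (has : a ∈ s) (hat : a ∈ t)
    (h1 : LipschitzOnWith K f s) (h2 : LipschitzOnWith K f t) :
    LipschitzOnWith K f (s ∪ t) := by
  rw [lipschitzOnWith_iff_dist_le_mul] at *
  rintro x (hx | hx) y (hy | hy)
  · exact h1 x hx y hy
  · have hxa : x ≤ a := hs hx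
    have hay : a ≤ y := ht hy
    calc dist (f x) (f y) ≤ dist (f x) (f a) + dist (f a) (f y) := dist_triangle _ _ _
    _ ≤ K * dist x a + K * dist a y := add_le_add (h1 x hx a has) (h2 a hat y hy)
    _ = K * (dist x a + dist a y) := by ring
    _ = K * dist x y := by
        rw [Real.dist_eq, Real.dist_eq, Real.dist_eq,
          abs_of_nonpos (by linarith), abs_of_nonpos (by linarith),
          abs_of_nonpos (by linarith)]
        ring
  · have hya : y ≤ a := hs hy
    have hax : a ≤ x := ht hx
    calc dist (f x) (f y) ≤ dist (f x) (f a) + dist (f a) (f y) := dist_triangle _ _ _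
    _ ≤ K * dist x a + K * dist a y := add_le_add (h2 x hx a hat) (h1 a has y hy)
    _ = K * (dist x a + dist a y) := by ring
    _ = K * dist x y := by
        rw [Real.dist_eq, Real.dist_eq, Real.dist_eq,
          abs_of_nonneg (by linarith), abs_of_nonneg (by linarith),
          abs_of_nonneg (by linarith)]
        ring
  · exact h2 x hx y hy

lemma fp_lipschitz : LipschitzWith 184 fp := by
  rw [← lipschitzOnWith_univ]
  apply lipOn_of_deriv convex_univ (fun x _ => (fp_hasDerivAt x).hasDerivWithinAt)
  intro x _
  have := gp_abs_le x
  push_cast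
  linarith

lemma f1_lipschitz : LipschitzWith 184 f1 := by
  rw [← lipschitzOnWith_univ, ← Iic_union_Ici (a := (0:ℝ))]
  apply lipschitzOnWith_glue (le_refl _) (le_refl _) (self_mem_Iic) (self_mem_Ici)
  · rw [lipschitzOnWith_iff_dist_le_mul]
    intro x hx y hy
    rw [Real.dist_eq, f1_eq_negfp (mem_Iic.mp hx), f1_eq_negfp (mem_Iic.mp hy)]
    have := (lipschitzWith_iff_dist_le_mul.mp fp_lipschitz) x y
    rw [Real.dist_eq, Real.dist_eq] at this
    calc |(-fp x) - (-fp y)| = |fp y - fp x| := by rw [show (-fp x) - (-fp y) = fp y - fp x by ring]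
    _ = |fp x - fp y| := abs_sub_comm _ _
    _ ≤ 184 * |x - y| := this
  · rw [lipschitzOnWith_iff_dist_le_mul]
    intro x hx y hy
    rw [Real.dist_eq, f1_eq_fp (mem_Ici.mp hx), f1_eq_fp (mem_Ici.mp hy)]
    have := (lipschitzWith_iff_dist_le_mul.mp fp_lipschitz) x y
    rw [Real.dist_eq, Real.dist_eq] at this
    exact this

lemma gp_eq_zero_left {u : ℝ} (h : u ≤ -1) : gp u = 0 := by
  rcases eq_or_lt_of_le h with h | h
  · subst h; exact gp_negone
  · rw [gp, if_neg]
    rw [not_le, lt_abs]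
    right; linarith

lemma gp_eq_zero_right {u : ℝ} (h : 1 ≤ u) : gp u = 0 := by
  rcases eq_or_lt_of_le h with h | h
  · rw [← h]; exact gp_one
  · rw [gp, if_neg]
    rw [not_le, lt_abs]
    left; linarith

lemma gp_lipschitz : LipschitzWith 768 gp := by
  have pmid : LipschitzOnWith 768 gp (Icc (-1) 1) := by
    apply lipOn_of_deriv (convex_Icc _ _)
      (g := fun u => -72*u + 360*u^3 - 336*u^5)
    · intro x hx
      apply (poly2_hasDerivAt x).hasDerivWithinAt.congr
      · intro y hy
        rw [gp, if_pos (abs_le.mpr ⟨hy.1, hy.2⟩)]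
      · rw [gp, if_pos (abs_le.mpr ⟨hx.1, hx.2⟩)]
    · intro x hx
      rcases hx with ⟨ha, hb⟩
      have h1 : |x| ≤ 1 := abs_le.mpr ⟨ha, hb⟩
      have h3 : |x^3| ≤ 1 := by rw [abs_pow]; exact pow_le_one₀ (abs_nonneg x) h1
      have h5 : |x^5| ≤ 1 := by rw [abs_pow]; exact pow_le_one₀ (abs_nonneg x) h1
      push_cast
      calc |-72*x + 360*x^3 - 336*x^5| ≤ |(-72)*x| + |360*x^3| + |(-336)*x^5| := by
            rw [show -72*x + 360*x^3 - 336*x^5 = (-72)*x + 360*x^3 + (-336)*x^5 by ring]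
            exact (abs_add_three _ _ _)
      _ = 72*|x| + 360*|x^3| + 336*|x^5| := by
            rw [abs_mul, abs_mul, abs_mul]; norm_num
      _ ≤ 72*1 + 360*1 + 336*1 := by gcongr
      _ = 768 := by norm_num
  have pleft : LipschitzOnWith 768 gp (Iic (-1)) := by
    rw [lipschitzOnWith_iff_dist_le_mul]
    intro x hx y hy
    rw [gp_eq_zero_left (mem_Iic.mp hx), gp_eq_zero_left (mem_Iic.mp hy)]
    simp [dist_nonneg]
  have pright : LipschitzOnWith 768 gp (Ici 1) := by
    rw [lipschitzOnWith_iff_dist_le_mul]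
    intro x hx y hy
    rw [gp_eq_zero_right (mem_Ici.mp hx), gp_eq_zero_right (mem_Ici.mp hy)]
    simp [dist_nonneg]
  have pIic : LipschitzOnWith 768 gp (Iic 1) := by
    have : Iic (1:ℝ) = Iic (-1) ∪ Icc (-1) 1 := by
      rw [Iic_union_Icc_eq_Iic (by norm_num : (-1:ℝ) ≤ 1)]
    rw [this]
    exact lipschitzOnWith_glue (le_refl _) (Icc_subset_Ici_self) self_mem_Iic
      (left_mem_Icc.mpr (by norm_num)) pleft pmid
  rw [← lipschitzOnWith_univ, ← Iic_union_Ici (a := (1:ℝ))]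
  exact lipschitzOnWith_glue (le_refl _) (le_refl _) self_mem_Iic self_mem_Ici pIic pright

lemma f2_lipschitzOn_Ioi : LipschitzOnWith 768 f2 (Ioi 0) := by
  rw [lipschitzOnWith_iff_dist_le_mul]
  intro x hx y hy
  rw [Real.dist_eq, f2, if_pos (le_of_lt (mem_Ioi.mp hx)), f2, if_pos (le_of_lt (mem_Ioi.mp hy))]
  have := (lipschitzWith_iff_dist_le_mul.mp gp_lipschitz) x y
  rw [Real.dist_eq, Real.dist_eq] at this
  exact this

lemma f2_lipschitzOn_Iio : LipschitzOnWith 768 f2 (Iio 0) := by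
  rw [lipschitzOnWith_iff_dist_le_mul]
  intro x hx y hy
  rw [Real.dist_eq, f2, if_neg (not_le.mpr (mem_Iio.mp hx)), f2,
    if_neg (not_le.mpr (mem_Iio.mp hy))]
  have := (lipschitzWith_iff_dist_le_mul.mp gp_lipschitz) x y
  rw [Real.dist_eq, Real.dist_eq] at this
  calc |(-gp x) - (-gp y)| = |gp y - gp x| := by rw [show (-gp x) - (-gp y) = gp y - gp x by ring]
  _ = |gp x - gp y| := abs_sub_comm _ _
  _ ≤ 768 * |x - y| := this

lemma f0_eq_zero {u : ℝ} (h : 1 ≤ |u|) : f0 u = 0 := by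
  rcases eq_or_lt_of_le h with h | h
  · rcases (abs_eq (by norm_num : (0:ℝ) ≤ 1)).mp h.symm with h1 | h1
    · rw [h1]; exact f0_one
    · rw [h1]; exact f0_negone
  · rw [f0, phi, if_neg (not_le.mpr h), zero_mul]

lemma neg_div_cube {A B : ℝ} (hB : B ≠ 0) : -(A * B⁻¹)/B^2 = (-A)/B^3 := by
  field_simp

lemma inv_diff_bound {b c δ : ℝ} (hδ : 0 < δ) (hb : δ ≤ b) (hc : δ ≤ c) :
    |b⁻¹ - c⁻¹| ≤ δ⁻¹ * δ⁻¹ * |b - c| := by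
  have hb0 : 0 < b := lt_of_lt_of_le hδ hb
  have hc0 : 0 < c := lt_of_lt_of_le hδ hc
  have e : b⁻¹ - c⁻¹ = (c - b) * (b⁻¹ * c⁻¹) := by field_simp
  rw [e, abs_mul, abs_mul, abs_of_pos (inv_pos.mpr hb0), abs_of_pos (inv_pos.mpr hc0),
    abs_sub_comm c b]
  have h1 : b⁻¹ ≤ δ⁻¹ := inv_anti₀ hδ hb
  have h2 : c⁻¹ ≤ δ⁻¹ := inv_anti₀ hδ hc
  calc |b - c| * (b⁻¹ * c⁻¹) ≤ |b - c| * (δ⁻¹ * δ⁻¹) := by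
        apply mul_le_mul_of_nonneg_left _ (abs_nonneg _)
        exact mul_le_mul h1 h2 (inv_pos.mpr hc0).le (inv_pos.mpr hδ).le
  _ = δ⁻¹ * δ⁻¹ * |b - c| := by ring

lemma cube_quot_bound {A1 A2 B1 B2 δ L MA Ka Kb : ℝ} (hδ : 0 < δ) (hB1 : δ ≤ B1) (hB2 : δ ≤ B2)
    (hB1L : B1 ≤ L) (hB2L : B2 ≤ L) (hA2 : |A2| ≤ MA) (hKa : |A1 - A2| ≤ Ka)
    (hKb : |B1 - B2| ≤ Kb) :
    |A1/B1^3 - A2/B2^3| ≤ Ka * (δ⁻¹)^3 + MA * (3*L^2) * Kb * (δ⁻¹)^6 := by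
  have hB10 : 0 < B1 := lt_of_lt_of_le hδ hB1
  have hB20 : 0 < B2 := lt_of_lt_of_le hδ hB2
  have hδ3 : (0:ℝ) < δ^3 := by positivity
  have hKb0 : 0 ≤ Kb := le_trans (abs_nonneg _) hKb
  have hKa0 : 0 ≤ Ka := le_trans (abs_nonneg _) hKa
  have hMA0 : 0 ≤ MA := le_trans (abs_nonneg _) hA2
  have hL0 : 0 < L := lt_of_lt_of_le hB10 hB1L
  have e : A1/B1^3 - A2/B2^3 = (A1 - A2)/B1^3 + A2 * ((B2^3 - B1^3)/(B1^3*B2^3)) := by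
    field_simp
    ring
  have hcube : |B2^3 - B1^3| ≤ 3*L^2*Kb := by
    rw [show B2^3 - B1^3 = (B2 - B1)*(B2^2 + B2*B1 + B1^2) by ring, abs_mul]
    have h2 : |B2^2 + B2*B1 + B1^2| ≤ 3*L^2 := by
      rw [abs_of_pos (by positivity)]
      nlinarith
    calc |B2 - B1| * |B2^2 + B2*B1 + B1^2| ≤ Kb * (3*L^2) := by
          apply mul_le_mul _ h2 (abs_nonneg _) hKb0
          rw [abs_sub_comm]; exact hKb
    _ = 3*L^2*Kb := by ring
  calc |A1/B1^3 - A2/B2^3| ≤ |(A1 - A2)/B1^3| + |A2 * ((B2^3 - B1^3)/(B1^3*B2^3))| := by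
        rw [e]; exact abs_add_le _ _
  _ = |A1 - A2|/B1^3 + |A2| * (|B2^3 - B1^3|/(B1^3*B2^3)) := by
        rw [abs_div, abs_mul, abs_div, abs_of_pos (by positivity : (0:ℝ) < B1^3),
          abs_of_pos (by positivity : (0:ℝ) < B1^3*B2^3)]
  _ ≤ Ka/δ^3 + MA * ((3*L^2*Kb)/(δ^3*δ^3)) := by
        apply add_le_add
        · exact div_le_div₀ hKa0 hKa hδ3 (pow_le_pow_left₀ hδ.le hB1 3)
        · apply mul_le_mul hA2 _ (by positivity) hMA0
          apply div_le_div₀ (by positivity) hcube (by positivity)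
          exact mul_le_mul (pow_le_pow_left₀ hδ.le hB1 3) (pow_le_pow_left₀ hδ.le hB2 3)
            (by positivity) (by positivity)
  _ = Ka * (δ⁻¹)^3 + MA * (3*L^2) * Kb * (δ⁻¹)^6 := by
        rw [div_eq_mul_inv, div_eq_mul_inv, ← inv_pow]
        rw [show δ^3*δ^3 = δ^6 by ring, ← inv_pow]
        ring

end StmtAux

/-- properties of the transformation
`G(x) = x + Σ_k α_k·φ̄_k(x)` with `6·c₀·|α_k| < 1` and `2c₀ < ξ_{k+1} - ξ_k`:
(a) `G = id` outside `⋃_k (ξ_k - c₀, ξ_k + c₀)`;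
(b) `G` is strictly increasing and a bijection of `ℝ` with strictly increasing inverse;
(c) `G - id` and `G⁻¹ - id` are bounded, and `G`, `G⁻¹` are Lipschitz;
(d) `G`, `G⁻¹` are differentiable with bounded Lipschitz first derivatives, and outside the
finite set `{ξ₁, …, ξ_m}` they are twice differentiable with second derivatives bounded
and Lipschitz on every connected subset of the complement of that set. -/
theorem stmt_7 (m : ℕ) (ξ : Fin m → ℝ) (hξ : StrictMono ξ) (α : Fin m → ℝ)
    (c₀ : ℝ) (hc₀ : 0 < c₀) (hc₁ : ∀ k : Fin m, 6 * c₀ * |α k| < 1)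
    (hc₂ : ∀ (k : ℕ) (hk : k + 1 < m), 2 * c₀ < ξ ⟨k + 1, hk⟩ - ξ ⟨k, by omega⟩)
    (G : ℝ → ℝ) (hG : ∀ x : ℝ, G x = x + ∑ k : Fin m, α k * phibar (ξ k) c₀ x) :
    (∀ x : ℝ, x ∉ ⋃ k : Fin m, Set.Ioo (ξ k - c₀) (ξ k + c₀) → G x = x) ∧
    (StrictMono G ∧ Function.Bijective G ∧ StrictMono (Function.invFun G)) ∧
    ((∃ M : ℝ, ∀ x : ℝ, |G x - x| ≤ M ∧ |Function.invFun G x - x| ≤ M) ∧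
      (∃ K : NNReal, LipschitzWith K G ∧ LipschitzWith K (Function.invFun G))) ∧
    (Differentiable ℝ G ∧ Differentiable ℝ (Function.invFun G) ∧
      (∃ M : ℝ, ∀ x : ℝ, |deriv G x| ≤ M ∧ |deriv (Function.invFun G) x| ≤ M) ∧
      (∃ K : NNReal, LipschitzWith K (deriv G) ∧
        LipschitzWith K (deriv (Function.invFun G))) ∧
      (∀ x : ℝ, (∀ k : Fin m, x ≠ ξ k) →
        DifferentiableAt ℝ (deriv G) x ∧ DifferentiableAt ℝ (deriv (Function.invFun G)) x) ∧
      (∃ M : ℝ, ∀ x : ℝ, (∀ k : Fin m, x ≠ ξ k) →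
        |deriv (deriv G) x| ≤ M ∧ |deriv (deriv (Function.invFun G)) x| ≤ M) ∧
      (∃ K : NNReal, ∀ s : Set ℝ, IsPreconnected s → (∀ x ∈ s, ∀ k : Fin m, x ≠ ξ k) →
        LipschitzOnWith K (deriv (deriv G)) s ∧
        LipschitzOnWith K (deriv (deriv (Function.invFun G))) s)) := by
  classical
  open StmtAux Set in
  -- abbreviations
  have hc₀' : c₀ ≠ 0 := ne_of_gt hc₀
  set Φ : ℝ → ℝ := Function.invFun G with hΦdef
  set u : ℝ → Fin m → ℝ := fun x k => (x - ξ k) / c₀ with hudef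
  set F1 : ℝ → ℝ := fun x => 1 + ∑ k : Fin m, α k * (c₀ * StmtAux.f1 (u x k)) with hF1def
  set F2 : ℝ → ℝ := fun x => ∑ k : Fin m, α k * StmtAux.f2 (u x k) with hF2def
  set a : ℝ := ((Finset.univ.sup fun k : Fin m => ‖6 * c₀ * α k‖₊ : NNReal) : ℝ) with hadef
  set S : ℝ := ∑ k : Fin m, |α k| with hSdef
  set δ : ℝ := 1 - a with hδdef
  -- basic constants facts
  have ha0 : 0 ≤ a := NNReal.coe_nonneg _
  have hS0 : 0 ≤ S := Finset.sum_nonneg fun k _ => abs_nonneg _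
  have ha1 : a < 1 := by
    rw [hadef, show (1:ℝ) = ((1:NNReal):ℝ) by norm_num, NNReal.coe_lt_coe]
    apply (Finset.sup_lt_iff (by norm_num : (⊥:NNReal) < 1)).mpr
    intro k _
    rw [← NNReal.coe_lt_coe, coe_nnnorm, Real.norm_eq_abs, NNReal.coe_one]
    calc |6 * c₀ * α k| = 6 * c₀ * |α k| := by
          rw [abs_mul, abs_of_pos (by linarith : (0:ℝ) < 6 * c₀)]
    _ < 1 := hc₁ k
  have hak : ∀ k : Fin m, |α k| * (c₀ * 6) ≤ a := by
    intro k
    have h1 : ‖6 * c₀ * α k‖₊ ≤ Finset.univ.sup fun k : Fin m => ‖6 * c₀ * α k‖₊ :=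
      Finset.le_sup (f := fun k : Fin m => ‖6 * c₀ * α k‖₊) (Finset.mem_univ k)
    rw [← NNReal.coe_le_coe, coe_nnnorm, Real.norm_eq_abs] at h1
    calc |α k| * (c₀ * 6) = |6 * c₀ * α k| := by
          rw [abs_mul, abs_of_pos (by linarith : (0:ℝ) < 6 * c₀)]; ring
    _ ≤ a := h1
  have hδ : 0 < δ := by rw [hδdef]; linarith
  -- separation of the ξ's
  have hsep : ∀ j k : Fin m, j < k → 2 * c₀ < ξ k - ξ j := by
    intro j k hjk
    have hjk' : (j:ℕ) < (k:ℕ) := hjk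
    have h1 : (j:ℕ) + 1 < m := lt_of_le_of_lt (Nat.succ_le_of_lt hjk') k.2
    have h2 := hc₂ (j:ℕ) h1
    have h3 : ξ ⟨(j:ℕ) + 1, h1⟩ ≤ ξ k := by
      apply hξ.monotone
      rw [Fin.le_def]
      exact Nat.succ_le_of_lt hjk'
    have h4 : (⟨(j:ℕ), by omega⟩ : Fin m) = j := by ext; rfl
    rw [h4] at h2
    linarith
  have hdis : ∀ (x : ℝ) (j k : Fin m), |x - ξ j| ≤ c₀ → |x - ξ k| ≤ c₀ → j = k := by
    intro x j k hj hk
    rcases lt_trichotomy j k with h | h | h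
    · exfalso
      have := hsep j k h
      rcases abs_le.mp hj with ⟨h1, h2⟩
      rcases abs_le.mp hk with ⟨h3, h4⟩
      linarith
    · exact h
    · exfalso
      have := hsep k j h
      rcases abs_le.mp hj with ⟨h1, h2⟩
      rcases abs_le.mp hk with ⟨h3, h4⟩
      linarith
  -- |u| facts
  have huabs : ∀ (x : ℝ) (k : Fin m), |u x k| = |x - ξ k| / c₀ := by
    intro x k
    rw [hudef]
    rw [abs_div, abs_of_pos hc₀]
  have hu_le_one : ∀ (x : ℝ) (k : Fin m), |x - ξ k| ≤ c₀ ↔ |u x k| ≤ 1 := by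
    intro x k
    rw [huabs, div_le_one hc₀]
  have hf1zero : ∀ (x : ℝ) (k : Fin m), ¬ |x - ξ k| ≤ c₀ → StmtAux.f1 (u x k) = 0 := by
    intro x k h
    rw [StmtAux.f1, if_neg]
    rw [← hu_le_one x k]
    exact h
  -- the single active bump bound
  have hsum_le : ∀ x : ℝ, |∑ k : Fin m, α k * (c₀ * StmtAux.f1 (u x k))| ≤ a := by
    intro x
    by_cases hex : ∃ k : Fin m, |x - ξ k| ≤ c₀
    · obtain ⟨k₀, hk₀⟩ := hex
      rw [Finset.sum_eq_single_of_mem k₀ (Finset.mem_univ _)]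
      · calc |α k₀ * (c₀ * StmtAux.f1 (u x k₀))|
            = |α k₀| * (c₀ * |StmtAux.f1 (u x k₀)|) := by
              rw [abs_mul, abs_mul, abs_of_pos hc₀]
        _ ≤ |α k₀| * (c₀ * 6) := by
              apply mul_le_mul_of_nonneg_left _ (abs_nonneg _)
              exact mul_le_mul_of_nonneg_left (StmtAux.f1_abs_le _) hc₀.le
        _ ≤ a := hak k₀
      · intro b _ hb
        rw [hf1zero x b (fun hc => hb (hdis x b k₀ hc hk₀)), mul_zero, mul_zero]
    · push_neg at hex
      rw [Finset.sum_eq_zero (fun k _ => by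
        rw [hf1zero x k (not_le.mpr (hex k)), mul_zero, mul_zero])]
      simpa using ha0
  have hF1low : ∀ x, δ ≤ F1 x := by
    intro x
    have := (abs_le.mp (hsum_le x)).1
    rw [hF1def, hδdef]
    simp only
    linarith
  have hF1high : ∀ x, F1 x ≤ 1 + a := by
    intro x
    have := (abs_le.mp (hsum_le x)).2
    rw [hF1def]
    simp only
    linarith
  have hF1pos : ∀ x, 0 < F1 x := fun x => lt_of_lt_of_le hδ (hF1low x)
  -- derivative of G
  have hinner : ∀ (k : Fin m) (x : ℝ), HasDerivAt (fun y : ℝ => (y - ξ k) / c₀) (1/c₀) x := by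
    intro k x
    simpa using ((hasDerivAt_id x).sub_const (ξ k)).div_const c₀
  have hterm : ∀ (k : Fin m) (x : ℝ), HasDerivAt (fun y => α k * phibar (ξ k) c₀ y)
      (α k * (c₀ * StmtAux.f1 (u x k))) x := by
    intro k x
    have hcomp : HasDerivAt (fun y : ℝ => StmtAux.f0 ((y - ξ k)/c₀))
        (StmtAux.f1 (u x k) * (1/c₀)) x :=
      HasDerivAt.comp (h₂ := StmtAux.f0) x (StmtAux.f0_hasDerivAt (u x k)) (hinner k x)
    have h2 : HasDerivAt (fun y : ℝ => α k * (c₀^2 * StmtAux.f0 ((y - ξ k)/c₀)))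
        (α k * (c₀^2 * (StmtAux.f1 (u x k) * (1/c₀)))) x :=
      (hcomp.const_mul _).const_mul _
    have he : (fun y : ℝ => α k * (c₀^2 * StmtAux.f0 ((y - ξ k)/c₀)))
        = fun y => α k * phibar (ξ k) c₀ y := by
      funext y
      rw [StmtAux.phibar_eq hc₀]
    rw [he] at h2
    convert h2 using 1
    field_simp
  have hGeq : G = fun y => y + ∑ k : Fin m, α k * phibar (ξ k) c₀ y := funext hG
  have hGd : ∀ x, HasDerivAt G (F1 x) x := by
    intro x
    rw [hGeq]
    exact (hasDerivAt_id x).add (HasDerivAt.fun_sum fun k _ => hterm k x)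
  have hGdiff : Differentiable ℝ G := fun x => (hGd x).differentiableAt
  have hderivG : deriv G = F1 := funext fun x => (hGd x).deriv
  -- strict monotonicity and lower bound
  have hGmono : StrictMono G := by
    apply strictMono_of_deriv_pos
    intro x
    rw [hderivG]
    exact hF1pos x
  have hGlow : ∀ x y : ℝ, x ≤ y → δ * (y - x) ≤ G y - G x := by
    intro x y hxy
    have hH : ∀ z, HasDerivAt (fun w => G w - δ * w) (F1 z - δ) z := by
      intro z
      have h5 : HasDerivAt (fun w : ℝ => δ * w) δ z := by
        simpa using (hasDerivAt_id z).const_mul δ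
      exact (hGd z).sub h5
    have hmono : Monotone (fun w => G w - δ * w) := by
      apply monotone_of_deriv_nonneg (fun z => (hH z).differentiableAt)
      intro z
      rw [(hH z).deriv]
      linarith [hF1low z]
    have := hmono hxy
    simp only at this
    linarith
  -- bound on G - id
  have hM0 : ∀ x : ℝ, |G x - x| ≤ S * c₀^2 := by
    intro x
    rw [hG]
    rw [show x + (∑ k : Fin m, α k * phibar (ξ k) c₀ x) - x
        = ∑ k : Fin m, α k * phibar (ξ k) c₀ x by ring]
    calc |∑ k : Fin m, α k * phibar (ξ k) c₀ x| ≤ ∑ k : Fin m, |α k * phibar (ξ k) c₀ x| :=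
          Finset.abs_sum_le_sum_abs _ _
    _ ≤ ∑ k : Fin m, |α k| * c₀^2 := by
          apply Finset.sum_le_sum
          intro k _
          rw [abs_mul, StmtAux.phibar_eq hc₀, abs_mul, abs_pow, abs_of_pos hc₀]
          apply mul_le_mul_of_nonneg_left _ (abs_nonneg _)
          calc c₀^2 * |StmtAux.f0 ((x - ξ k)/c₀)| ≤ c₀^2 * 1 :=
                mul_le_mul_of_nonneg_left (StmtAux.f0_abs_le _) (by positivity)
          _ = c₀^2 := mul_one _
    _ = S * c₀^2 := by rw [hSdef, Finset.sum_mul]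
  -- surjectivity and bijectivity
  have hGsurj : Function.Surjective G := by
    apply Continuous.surjective hGdiff.continuous
    · apply Filter.tendsto_atTop_mono (f := fun x : ℝ => x + (-(S * c₀^2)))
      · intro x
        have := abs_le.mp (hM0 x)
        linarith [this.1]
      · exact Filter.tendsto_atTop_add_const_right _ _ Filter.tendsto_id
    · apply Filter.tendsto_atBot_mono (f := fun x : ℝ => x + S * c₀^2)
      · intro x
        have := abs_le.mp (hM0 x)
        linarith [this.2]
      · exact Filter.tendsto_atBot_add_const_right _ _ Filter.tendsto_id
  have hGbij : Function.Bijective G := ⟨hGmono.injective, hGsurj⟩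
  -- inverse basics
  have hΦr : ∀ x, G (Φ x) = x := fun x => Function.rightInverse_invFun hGsurj x
  have hΦl : ∀ x, Φ (G x) = x := fun x => Function.leftInverse_invFun hGmono.injective x
  have hΦmono : StrictMono Φ := by
    intro x y hxy
    by_contra hle
    push_neg at hle
    have := hGmono.monotone hle
    rw [hΦr, hΦr] at this
    exact absurd this (not_le.mpr hxy)
  have hΦlipR : ∀ x y : ℝ, |Φ x - Φ y| ≤ δ⁻¹ * |x - y| := by
    intro x y
    rcases le_total (Φ x) (Φ y) with h | h
    · have := hGlow _ _ h
      rw [hΦr, hΦr] at this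
      rw [abs_sub_comm, abs_of_nonneg (by linarith : (0:ℝ) ≤ Φ y - Φ x)]
      rw [← mul_le_mul_iff_right₀ hδ, show δ * (δ⁻¹ * |x - y|) = |x - y| by field_simp]
      calc δ * (Φ y - Φ x) ≤ y - x := this
      _ ≤ |x - y| := by rw [abs_sub_comm]; exact le_abs_self _
    · have := hGlow _ _ h
      rw [hΦr, hΦr] at this
      rw [abs_of_nonneg (by linarith : (0:ℝ) ≤ Φ x - Φ y)]
      rw [← mul_le_mul_iff_right₀ hδ, show δ * (δ⁻¹ * |x - y|) = |x - y| by field_simp]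
      calc δ * (Φ x - Φ y) ≤ x - y := this
      _ ≤ |x - y| := le_abs_self _
  have hΦlip : LipschitzWith (Real.toNNReal δ⁻¹) Φ := by
    apply LipschitzWith.of_dist_le_mul
    intro x y
    rw [Real.dist_eq, Real.dist_eq]
    calc |Φ x - Φ y| ≤ δ⁻¹ * |x - y| := hΦlipR x y
    _ ≤ (Real.toNNReal δ⁻¹ : ℝ) * |x - y| :=
        mul_le_mul_of_nonneg_right (Real.le_coe_toNNReal _) (abs_nonneg _)
  have hΦcont : Continuous Φ := hΦlip.continuous
  have hΦbound : ∀ x : ℝ, |Φ x - x| ≤ S * c₀^2 := by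
    intro x
    have := hM0 (Φ x)
    rw [hΦr] at this
    rwa [abs_sub_comm]
  -- derivative of Φ
  have hΦd : ∀ x, HasDerivAt Φ (F1 (Φ x))⁻¹ x := by
    intro x
    apply HasDerivAt.of_local_left_inverse hΦcont.continuousAt (hGd (Φ x))
      (ne_of_gt (hF1pos (Φ x)))
    exact Filter.Eventually.of_forall hΦr
  have hΦdiff : Differentiable ℝ Φ := fun x => (hΦd x).differentiableAt
  have hderivΦ : deriv Φ = fun x => (F1 (Φ x))⁻¹ := funext fun x => (hΦd x).deriv
  -- Lipschitz bound for F1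
  have hf1lip : ∀ p q : ℝ, |StmtAux.f1 p - StmtAux.f1 q| ≤ 184 * |p - q| := by
    intro p q
    have h := lipschitzWith_iff_dist_le_mul.mp StmtAux.f1_lipschitz p q
    rw [Real.dist_eq, Real.dist_eq] at h
    calc |StmtAux.f1 p - StmtAux.f1 q| ≤ ((184:NNReal):ℝ) * |p - q| := h
    _ = 184 * |p - q| := by norm_num
  have hudiff : ∀ (x y : ℝ) (k : Fin m), |u x k - u y k| = |x - y| / c₀ := by
    intro x y k
    rw [hudef]
    rw [show (x - ξ k)/c₀ - (y - ξ k)/c₀ = (x - y)/c₀ by ring, abs_div, abs_of_pos hc₀]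
  have hF1lipR : ∀ x y : ℝ, |F1 x - F1 y| ≤ 184 * S * |x - y| := by
    intro x y
    rw [hF1def]
    simp only
    rw [show (1 + ∑ k : Fin m, α k * (c₀ * StmtAux.f1 (u x k)))
        - (1 + ∑ k : Fin m, α k * (c₀ * StmtAux.f1 (u y k)))
        = ∑ k : Fin m, (α k * (c₀ * StmtAux.f1 (u x k)) - α k * (c₀ * StmtAux.f1 (u y k))) by
      rw [Finset.sum_sub_distrib]; ring]
    calc |∑ k : Fin m, (α k * (c₀ * StmtAux.f1 (u x k)) - α k * (c₀ * StmtAux.f1 (u y k)))|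
        ≤ ∑ k : Fin m, |α k * (c₀ * StmtAux.f1 (u x k)) - α k * (c₀ * StmtAux.f1 (u y k))| :=
          Finset.abs_sum_le_sum_abs _ _
    _ ≤ ∑ k : Fin m, |α k| * (184 * |x - y|) := by
          apply Finset.sum_le_sum
          intro k _
          rw [show α k * (c₀ * StmtAux.f1 (u x k)) - α k * (c₀ * StmtAux.f1 (u y k))
              = α k * c₀ * (StmtAux.f1 (u x k) - StmtAux.f1 (u y k)) by ring,
            abs_mul, abs_mul, abs_of_pos hc₀, mul_assoc]
          apply mul_le_mul_of_nonneg_left _ (abs_nonneg _)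
          calc c₀ * |StmtAux.f1 (u x k) - StmtAux.f1 (u y k)|
              ≤ c₀ * (184 * (|x - y| / c₀)) := by
                apply mul_le_mul_of_nonneg_left _ hc₀.le
                rw [← hudiff x y k]
                exact hf1lip _ _
          _ = 184 * |x - y| := by field_simp
    _ = 184 * S * |x - y| := by
          rw [← Finset.sum_mul, hSdef]
          ring
  -- second derivative of G away from the ξ's
  have hF1d2 : ∀ x : ℝ, (∀ k : Fin m, x ≠ ξ k) → HasDerivAt F1 (F2 x) x := by
    intro x hx
    have hterm2 : ∀ k : Fin m, HasDerivAt (fun y => α k * (c₀ * StmtAux.f1 (u y k)))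
        (α k * StmtAux.f2 (u x k)) x := by
      intro k
      have hu0 : u x k ≠ 0 := by
        rw [hudef]
        exact div_ne_zero (sub_ne_zero.mpr (hx k)) hc₀'
      have hcomp : HasDerivAt (fun y : ℝ => StmtAux.f1 ((y - ξ k)/c₀))
          (StmtAux.f2 (u x k) * (1/c₀)) x :=
        HasDerivAt.comp x (StmtAux.f1_hasDerivAt hu0) (hinner k x)
      have h2 : HasDerivAt (fun y : ℝ => α k * (c₀ * StmtAux.f1 ((y - ξ k)/c₀)))
          (α k * (c₀ * (StmtAux.f2 (u x k) * (1/c₀)))) x :=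
        (hcomp.const_mul _).const_mul _
      convert h2 using 1
      field_simp
    rw [hF1def]
    have h3 : HasDerivAt (fun y : ℝ => 1 + ∑ k : Fin m, α k * (c₀ * StmtAux.f1 (u y k)))
        (0 + ∑ k : Fin m, α k * StmtAux.f2 (u x k)) x :=
      (hasDerivAt_const x 1).add (HasDerivAt.fun_sum fun k _ => hterm2 k)
    rw [zero_add] at h3
    exact h3
  have hddGeq : ∀ x : ℝ, (∀ k : Fin m, x ≠ ξ k) → deriv (deriv G) x = F2 x := by
    intro x hx
    rw [hderivG]
    exact (hF1d2 x hx).deriv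
  have hF2bound : ∀ x : ℝ, |F2 x| ≤ S * 184 := by
    intro x
    rw [hF2def]
    calc |∑ k : Fin m, α k * StmtAux.f2 (u x k)| ≤ ∑ k : Fin m, |α k * StmtAux.f2 (u x k)| :=
          Finset.abs_sum_le_sum_abs _ _
    _ ≤ ∑ k : Fin m, |α k| * 184 := by
          apply Finset.sum_le_sum
          intro k _
          rw [abs_mul]
          exact mul_le_mul_of_nonneg_left (StmtAux.f2_abs_le _) (abs_nonneg _)
    _ = S * 184 := by rw [hSdef, Finset.sum_mul]
  -- fixed points
  have hGfix : ∀ k : Fin m, G (ξ k) = ξ k := by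
    intro k
    rw [hG]
    rw [Finset.sum_eq_zero, add_zero]
    intro j _
    by_cases hjk : j = k
    · subst hjk
      simp [phibar]
    · have hfar : c₀ < |ξ k - ξ j| := by
        rcases lt_trichotomy j k with h | h | h
        · have := hsep j k h
          rw [abs_of_pos (by linarith)]
          linarith
        · exact absurd h hjk
        · have := hsep k j h
          rw [abs_of_neg (by linarith)]
          linarith
      have hn : ¬ |(ξ k - ξ j)/c₀| ≤ 1 := by
        rw [abs_div, abs_of_pos hc₀, not_le, one_lt_div hc₀]
        exact hfar
      rw [phibar, phi, if_neg hn, zero_mul, zero_mul, mul_zero]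
  have hΦfix : ∀ k : Fin m, Φ (ξ k) = ξ k := by
    intro k
    have := hΦl (ξ k)
    rwa [hGfix k] at this
  have hΦne : ∀ x : ℝ, (∀ k : Fin m, x ≠ ξ k) → (∀ k : Fin m, Φ x ≠ ξ k) := by
    intro x hx k h
    apply hx k
    rw [← hΦr x, h, hGfix k]
  -- second derivative of Φ
  have hcd : ∀ x : ℝ, (∀ k : Fin m, x ≠ ξ k) →
      HasDerivAt (fun y => (F1 (Φ y))⁻¹)
        (-(F2 (Φ x) * (F1 (Φ x))⁻¹) / (F1 (Φ x))^2) x := by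
    intro x hx
    have hc1 : HasDerivAt (fun y => F1 (Φ y)) (F2 (Φ x) * (F1 (Φ x))⁻¹) x :=
      (hF1d2 (Φ x) (hΦne x hx)).comp x (hΦd x)
    exact hc1.inv (ne_of_gt (hF1pos _))
  have hddΦeq : ∀ x : ℝ, (∀ k : Fin m, x ≠ ξ k) →
      deriv (deriv Φ) x = -(F2 (Φ x) * (F1 (Φ x))⁻¹) / (F1 (Φ x))^2 := by
    intro x hx
    rw [hderivΦ]
    exact (hcd x hx).deriv
  have hinvF1 : ∀ z : ℝ, (F1 z)⁻¹ ≤ δ⁻¹ := fun z => inv_anti₀ hδ (hF1low z)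
  have hinvF1sq : ∀ z : ℝ, ((F1 z)^2)⁻¹ ≤ (δ^2)⁻¹ := fun z =>
    inv_anti₀ (by positivity) (pow_le_pow_left₀ hδ.le (hF1low z) 2)
  have hΦsb : ∀ x : ℝ, (∀ k : Fin m, x ≠ ξ k) →
      |deriv (deriv Φ) x| ≤ S * 184 * (δ⁻¹ * (δ^2)⁻¹) := by
    intro x hx
    rw [hddΦeq x hx]
    have hb := hF1pos (Φ x)
    rw [abs_div, abs_neg, abs_mul, abs_of_pos (inv_pos.mpr hb),
      abs_of_pos (pow_pos hb 2), div_eq_mul_inv, mul_assoc]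
    apply mul_le_mul (hF2bound _) _ _ (mul_nonneg hS0 (by norm_num))
    · exact mul_le_mul (hinvF1 _) (hinvF1sq _) (by positivity) (by positivity)
    · positivity
  -- pairwise estimates for F2 on one side of the ξ's
  have hside : ∀ (x y : ℝ) (k : Fin m), ξ k ∉ Set.uIcc x y →
      (ξ k < x ∧ ξ k < y) ∨ (x < ξ k ∧ y < ξ k) := by
    intro x y k h
    rcases lt_trichotomy (ξ k) x with h1 | h1 | h1
    · rcases lt_trichotomy (ξ k) y with h2 | h2 | h2
      · exact Or.inl ⟨h1, h2⟩
      · exact absurd (by rw [h2]; exact Set.right_mem_uIcc) h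
      · exact absurd (Set.mem_uIcc.mpr (Or.inr ⟨h2.le, h1.le⟩)) h
    · exact absurd (by rw [← h1]; exact Set.left_mem_uIcc) h
    · rcases lt_trichotomy (ξ k) y with h2 | h2 | h2
      · exact absurd (Set.mem_uIcc.mpr (Or.inl ⟨h1.le, h2.le⟩)) h
      · exact absurd (by rw [h2]; exact Set.right_mem_uIcc) h
      · exact Or.inr ⟨h1, h2⟩
  have hf2term : ∀ (x y : ℝ) (k : Fin m),
      (ξ k < x ∧ ξ k < y) ∨ (x < ξ k ∧ y < ξ k) →
      |StmtAux.f2 (u x k) - StmtAux.f2 (u y k)| ≤ 768 * (|x - y| / c₀) := by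
    intro x y k h
    rcases h with ⟨h1, h2⟩ | ⟨h1, h2⟩
    · have hux : u x k ∈ Set.Ioi (0:ℝ) := by
        rw [hudef]; exact div_pos (sub_pos.mpr h1) hc₀
      have huy : u y k ∈ Set.Ioi (0:ℝ) := by
        rw [hudef]; exact div_pos (sub_pos.mpr h2) hc₀
      have h := lipschitzOnWith_iff_dist_le_mul.mp StmtAux.f2_lipschitzOn_Ioi _ hux _ huy
      rw [Real.dist_eq, Real.dist_eq, hudiff x y k] at h
      calc |StmtAux.f2 (u x k) - StmtAux.f2 (u y k)| ≤ ((768:NNReal):ℝ) * (|x - y|/c₀) := h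
      _ = 768 * (|x - y|/c₀) := by norm_num
    · have hux : u x k ∈ Set.Iio (0:ℝ) := by
        rw [hudef]; exact div_neg_of_neg_of_pos (sub_neg.mpr h1) hc₀
      have huy : u y k ∈ Set.Iio (0:ℝ) := by
        rw [hudef]; exact div_neg_of_neg_of_pos (sub_neg.mpr h2) hc₀
      have h := lipschitzOnWith_iff_dist_le_mul.mp StmtAux.f2_lipschitzOn_Iio _ hux _ huy
      rw [Real.dist_eq, Real.dist_eq, hudiff x y k] at h
      calc |StmtAux.f2 (u x k) - StmtAux.f2 (u y k)| ≤ ((768:NNReal):ℝ) * (|x - y|/c₀) := h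
      _ = 768 * (|x - y|/c₀) := by norm_num
  have hF2pair : ∀ x y : ℝ, (∀ k : Fin m, ξ k ∉ Set.uIcc x y) →
      |F2 x - F2 y| ≤ 768 * S * c₀⁻¹ * |x - y| := by
    intro x y hxy
    rw [hF2def]
    simp only
    rw [show (∑ k : Fin m, α k * StmtAux.f2 (u x k)) - ∑ k : Fin m, α k * StmtAux.f2 (u y k)
        = ∑ k : Fin m, (α k * StmtAux.f2 (u x k) - α k * StmtAux.f2 (u y k)) by
      rw [Finset.sum_sub_distrib]]
    calc |∑ k : Fin m, (α k * StmtAux.f2 (u x k) - α k * StmtAux.f2 (u y k))|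
        ≤ ∑ k : Fin m, |α k * StmtAux.f2 (u x k) - α k * StmtAux.f2 (u y k)| :=
          Finset.abs_sum_le_sum_abs _ _
    _ ≤ ∑ k : Fin m, |α k| * (768 * (|x - y| / c₀)) := by
          apply Finset.sum_le_sum
          intro k _
          rw [← mul_sub, abs_mul]
          exact mul_le_mul_of_nonneg_left (hf2term x y k (hside x y k (hxy k))) (abs_nonneg _)
    _ = 768 * S * c₀⁻¹ * |x - y| := by
          rw [← Finset.sum_mul, hSdef, div_eq_mul_inv]
          ring
  have hΦuIcc : ∀ x y : ℝ, (∀ k : Fin m, ξ k ∉ Set.uIcc x y) →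
      (∀ k : Fin m, ξ k ∉ Set.uIcc (Φ x) (Φ y)) := by
    intro x y h k hk
    apply h k
    rw [Set.mem_uIcc] at hk ⊢
    rcases hk with ⟨h1, h2⟩ | ⟨h1, h2⟩
    · left
      constructor
      · have := hGmono.monotone h1; rwa [hΦr, hGfix] at this
      · have := hGmono.monotone h2; rwa [hΦr, hGfix] at this
    · right
      constructor
      · have := hGmono.monotone h1; rwa [hΦr, hGfix] at this
      · have := hGmono.monotone h2; rwa [hΦr, hGfix] at this
  -- global Lipschitz bound for G
  have hGlipR : ∀ x y : ℝ, |G x - G y| ≤ (1 + a) * |x - y| := by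
    intro x y
    have h := Convex.norm_image_sub_le_of_norm_hasDerivWithin_le
      (f := G) (f' := F1) (s := Set.univ) (C := 1 + a)
      (fun z _ => (hGd z).hasDerivWithinAt)
      (fun z _ => by
        rw [Real.norm_eq_abs, abs_of_pos (hF1pos z)]
        exact hF1high z)
      convex_univ (Set.mem_univ y) (Set.mem_univ x)
    rw [Real.norm_eq_abs, Real.norm_eq_abs] at h
    exact h
  -- part (a)
  have parta : ∀ x : ℝ, x ∉ ⋃ k : Fin m, Set.Ioo (ξ k - c₀) (ξ k + c₀) → G x = x := by
    intro x hx
    have hfar : ∀ k : Fin m, c₀ ≤ |x - ξ k| := by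
      intro k
      by_contra h
      push_neg at h
      rcases abs_lt.mp h with ⟨h1, h2⟩
      exact hx (Set.mem_iUnion.mpr ⟨k, Set.mem_Ioo.mpr ⟨by linarith, by linarith⟩⟩)
    rw [hG, Finset.sum_eq_zero, add_zero]
    intro k _
    rw [StmtAux.phibar_eq hc₀, StmtAux.f0_eq_zero, mul_zero, mul_zero]
    rw [show |(x - ξ k)/c₀| = |u x k| by rw [hudef], huabs, le_div_iff₀ hc₀, one_mul]
    exact hfar k
  -- assemble
  refine ⟨parta, ⟨hGmono, hGbij, hΦmono⟩,
    ⟨⟨S * c₀^2, fun x => ⟨hM0 x, hΦbound x⟩⟩, ?_⟩,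
    hGdiff, hΦdiff, ?_, ?_, ?_, ?_, ?_⟩
  · -- Lipschitz for G and Φ
    refine ⟨Real.toNNReal (1 + a + δ⁻¹), ?_, ?_⟩
    · apply LipschitzWith.of_dist_le_mul
      intro x y
      rw [Real.dist_eq, Real.dist_eq]
      calc |G x - G y| ≤ (1 + a) * |x - y| := hGlipR x y
      _ ≤ (1 + a + δ⁻¹) * |x - y| := by
          apply mul_le_mul_of_nonneg_right _ (abs_nonneg _)
          simp [le_add_iff_nonneg_right, inv_nonneg, hδ.le]
      _ ≤ (Real.toNNReal (1 + a + δ⁻¹) : ℝ) * |x - y| :=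
          mul_le_mul_of_nonneg_right (Real.le_coe_toNNReal _) (abs_nonneg _)
    · apply LipschitzWith.of_dist_le_mul
      intro x y
      rw [Real.dist_eq, Real.dist_eq]
      calc |Φ x - Φ y| ≤ δ⁻¹ * |x - y| := hΦlipR x y
      _ ≤ (1 + a + δ⁻¹) * |x - y| := by
          apply mul_le_mul_of_nonneg_right _ (abs_nonneg _)
          linarith
      _ ≤ (Real.toNNReal (1 + a + δ⁻¹) : ℝ) * |x - y| :=
          mul_le_mul_of_nonneg_right (Real.le_coe_toNNReal _) (abs_nonneg _)
  · -- bounds on first derivatives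
    refine ⟨1 + a + δ⁻¹, fun x => ⟨?_, ?_⟩⟩
    · rw [hderivG, abs_of_pos (hF1pos x)]
      have h1 := hF1high x
      have h2 : (0:ℝ) ≤ δ⁻¹ := (inv_pos.mpr hδ).le
      calc F1 x ≤ 1 + a := h1
      _ ≤ 1 + a + δ⁻¹ := by linarith
    · rw [hderivΦ]
      have h1 : (0:ℝ) < (F1 (Φ x))⁻¹ := inv_pos.mpr (hF1pos _)
      rw [show |(F1 (Φ x))⁻¹| = (F1 (Φ x))⁻¹ from abs_of_pos h1]
      have := hinvF1 (Φ x)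
      have h3 : (0:ℝ) ≤ 1 + a := by linarith
      linarith
  · -- Lipschitz of first derivatives
    refine ⟨Real.toNNReal (184 * S + 184 * S * (δ⁻¹ * δ⁻¹ * δ⁻¹)), ?_, ?_⟩
    · apply LipschitzWith.of_dist_le_mul
      intro x y
      rw [Real.dist_eq, Real.dist_eq, hderivG]
      have hextra : (0:ℝ) ≤ 184 * S * (δ⁻¹ * δ⁻¹ * δ⁻¹) := by
        apply mul_nonneg (mul_nonneg (by norm_num) hS0)
        positivity
      calc |F1 x - F1 y| ≤ 184 * S * |x - y| := hF1lipR x y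
      _ ≤ (184 * S + 184 * S * (δ⁻¹ * δ⁻¹ * δ⁻¹)) * |x - y| := by
          apply mul_le_mul_of_nonneg_right _ (abs_nonneg _)
          linarith
      _ ≤ (Real.toNNReal (184 * S + 184 * S * (δ⁻¹ * δ⁻¹ * δ⁻¹)) : ℝ) * |x - y| :=
          mul_le_mul_of_nonneg_right (Real.le_coe_toNNReal _) (abs_nonneg _)
    · apply LipschitzWith.of_dist_le_mul
      intro x y
      rw [Real.dist_eq, Real.dist_eq, hderivΦ]
      have h184S : (0:ℝ) ≤ 184 * S := mul_nonneg (by norm_num) hS0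
      calc |(F1 (Φ x))⁻¹ - (F1 (Φ y))⁻¹|
          ≤ δ⁻¹ * δ⁻¹ * |F1 (Φ x) - F1 (Φ y)| :=
            StmtAux.inv_diff_bound hδ (hF1low _) (hF1low _)
      _ ≤ δ⁻¹ * δ⁻¹ * (184 * S * (δ⁻¹ * |x - y|)) := by
          apply mul_le_mul_of_nonneg_left _ (by positivity)
          calc |F1 (Φ x) - F1 (Φ y)| ≤ 184 * S * |Φ x - Φ y| := hF1lipR _ _
          _ ≤ 184 * S * (δ⁻¹ * |x - y|) :=
              mul_le_mul_of_nonneg_left (hΦlipR x y) h184S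
      _ = 184 * S * (δ⁻¹ * δ⁻¹ * δ⁻¹) * |x - y| := by ring
      _ ≤ (184 * S + 184 * S * (δ⁻¹ * δ⁻¹ * δ⁻¹)) * |x - y| := by
          apply mul_le_mul_of_nonneg_right _ (abs_nonneg _)
          linarith
      _ ≤ (Real.toNNReal (184 * S + 184 * S * (δ⁻¹ * δ⁻¹ * δ⁻¹)) : ℝ) * |x - y| :=
          mul_le_mul_of_nonneg_right (Real.le_coe_toNNReal _) (abs_nonneg _)
  · -- twice differentiability away from the ξ's
    intro x hx
    constructor
    · rw [hderivG]
      exact (hF1d2 x hx).differentiableAt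
    · rw [hderivΦ]
      exact (hcd x hx).differentiableAt
  · -- bounds on second derivatives
    refine ⟨S * 184 + S * 184 * (δ⁻¹ * (δ^2)⁻¹), fun x hx => ⟨?_, ?_⟩⟩
    · rw [hddGeq x hx]
      have hextra : (0:ℝ) ≤ S * 184 * (δ⁻¹ * (δ^2)⁻¹) := by
        apply mul_nonneg (mul_nonneg hS0 (by norm_num))
        positivity
      linarith [hF2bound x]
    · have := hΦsb x hx
      have hS184 : (0:ℝ) ≤ S * 184 := mul_nonneg hS0 (by norm_num)
      linarith
  · -- Lipschitz of second derivatives on connected sets avoiding the ξ's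
    set CG2 : ℝ := 768 * S * c₀⁻¹ with hCG2def
    set CP2 : ℝ := 768 * S * c₀⁻¹ * δ⁻¹ * (δ⁻¹)^3
      + (S * 184) * (3 * (1 + a)^2) * (184 * S * δ⁻¹) * (δ⁻¹)^6 with hCP2def
    have hCG2nn : 0 ≤ CG2 := by
      rw [hCG2def]
      apply mul_nonneg (mul_nonneg (by norm_num) hS0) (inv_nonneg.mpr hc₀.le)
    have hCP2nn : 0 ≤ CP2 := by
      rw [hCP2def]
      have h1 : (0:ℝ) ≤ 768 * S * c₀⁻¹ * δ⁻¹ * (δ⁻¹)^3 := by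
        apply mul_nonneg (mul_nonneg (mul_nonneg (mul_nonneg (by norm_num) hS0)
          (inv_nonneg.mpr hc₀.le)) (inv_nonneg.mpr hδ.le))
        positivity
      have h2 : (0:ℝ) ≤ (S * 184) * (3 * (1 + a)^2) * (184 * S * δ⁻¹) * (δ⁻¹)^6 := by
        apply mul_nonneg (mul_nonneg (mul_nonneg (mul_nonneg hS0 (by norm_num)) (by positivity))
          (mul_nonneg (mul_nonneg (by norm_num) hS0) (inv_nonneg.mpr hδ.le)))
        positivity
      linarith
    refine ⟨Real.toNNReal (CG2 + CP2), ?_⟩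
    intro s hs hsx
    have hkey : ∀ x ∈ s, ∀ y ∈ s, ∀ k : Fin m, ξ k ∉ Set.uIcc x y := by
      intro x hx y hy k hk
      exact hsx (ξ k) ((hs.ordConnected.uIcc_subset hx hy) hk) k rfl
    constructor
    · rw [lipschitzOnWith_iff_dist_le_mul]
      intro x hx y hy
      rw [Real.dist_eq, Real.dist_eq, hddGeq x (hsx x hx), hddGeq y (hsx y hy)]
      calc |F2 x - F2 y| ≤ CG2 * |x - y| := hF2pair x y (hkey x hx y hy)
      _ ≤ (CG2 + CP2) * |x - y| := by
          apply mul_le_mul_of_nonneg_right _ (abs_nonneg _)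
          linarith
      _ ≤ (Real.toNNReal (CG2 + CP2) : ℝ) * |x - y| :=
          mul_le_mul_of_nonneg_right (Real.le_coe_toNNReal _) (abs_nonneg _)
    · rw [lipschitzOnWith_iff_dist_le_mul]
      intro x hx y hy
      rw [Real.dist_eq, Real.dist_eq, hddΦeq x (hsx x hx), hddΦeq y (hsx y hy)]
      have hrw : ∀ z : ℝ, -(F2 (Φ z) * (F1 (Φ z))⁻¹) / (F1 (Φ z))^2
          = (-F2 (Φ z)) / (F1 (Φ z))^3 := by
        intro z
        exact StmtAux.neg_div_cube (ne_of_gt (hF1pos (Φ z)))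
      rw [hrw x, hrw y]
      have hKa : |(-F2 (Φ x)) - (-F2 (Φ y))| ≤ 768 * S * c₀⁻¹ * (δ⁻¹ * |x - y|) := by
        rw [show (-F2 (Φ x)) - (-F2 (Φ y)) = F2 (Φ y) - F2 (Φ x) by ring]
        calc |F2 (Φ y) - F2 (Φ x)| ≤ 768 * S * c₀⁻¹ * |Φ y - Φ x| :=
              hF2pair (Φ y) (Φ x) (hΦuIcc y x (hkey y hy x hx))
        _ ≤ 768 * S * c₀⁻¹ * (δ⁻¹ * |x - y|) := by
            apply mul_le_mul_of_nonneg_left _ hCG2nn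
            rw [show |x - y| = |y - x| from abs_sub_comm x y]
            exact hΦlipR y x
      have hKb : |F1 (Φ x) - F1 (Φ y)| ≤ 184 * S * (δ⁻¹ * |x - y|) := by
        calc |F1 (Φ x) - F1 (Φ y)| ≤ 184 * S * |Φ x - Φ y| := hF1lipR _ _
        _ ≤ 184 * S * (δ⁻¹ * |x - y|) :=
            mul_le_mul_of_nonneg_left (hΦlipR x y) (mul_nonneg (by norm_num) hS0)
      have hA2 : |(-F2 (Φ y))| ≤ S * 184 := by
        rw [abs_neg]
        exact hF2bound (Φ y)
      have := StmtAux.cube_quot_bound hδ (hF1low (Φ x)) (hF1low (Φ y))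
        (hF1high (Φ x)) (hF1high (Φ y)) hA2 hKa hKb
      calc |(-F2 (Φ x)) / (F1 (Φ x))^3 - (-F2 (Φ y)) / (F1 (Φ y))^3|
          ≤ (768 * S * c₀⁻¹ * (δ⁻¹ * |x - y|)) * (δ⁻¹)^3
            + (S * 184) * (3 * (1 + a)^2) * (184 * S * (δ⁻¹ * |x - y|)) * (δ⁻¹)^6 := this
      _ = CP2 * |x - y| := by rw [hCP2def]; ring
      _ ≤ (CG2 + CP2) * |x - y| := by
          apply mul_le_mul_of_nonneg_right _ (abs_nonneg _)
          linarith
      _ ≤ (Real.toNNReal (CG2 + CP2) : ℝ) * |x - y| :=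
          mul_le_mul_of_nonneg_right (Real.le_coe_toNNReal _) (abs_nonneg _)
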